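/- arXiv:2003.12339 — 2 statements merged into one kernel-verified Lean document; each statement's English description precedes it below -/
import Mathlib

section
/- Let a, σ : [0,∞) → ℝ be bounded functions, let Π1, Π2 be finite measures on ℝ, and let γ, δ : [0,∞) × ℝ → (−1,∞) be measurable functions such that ln(1+γ(t,z)) and ln(1+δ(t,z)) are bounded. Define β(t) = σ²(t)/2 + ∫_ℝ [γ(t,z) − ln(1+γ(t,z))] Π1(dz) − ∫_ℝ ln(1+δ(t,z)) Π2(dz). If inf_{t≥0} ( a(t) − β(t) ) > 0, then there exists θ ∈ (0,1) such that inf_{t≥0} { a(t) − σ²(t)/2 − ∫_ℝ γ(t,z) Π1(dz) − (θ/2)·σ²(t) − (1/θ)∫_ℝ [ (1+γ(t,z))^{−θ} − 1 ] Π1(dz) − (1/θ)∫_ℝ [ (1+δ(t,z))^{−θ} − 1 ] Π2(dz) } > 0. -/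
open MeasureTheory Filter

lemma bdd_integrable {μ : Measure ℝ} [IsFiniteMeasure μ] {f : ℝ → ℝ}
    (hm : Measurable f) {C : ℝ} (hC : ∀ z, |f z| ≤ C) : Integrable f μ :=
  ⟨hm.aestronglyMeasurable, HasFiniteIntegral.of_bounded (Eventually.of_forall hC)⟩

lemma key_pt {u θ B : ℝ} (hθ : 0 < θ)
    (hB : |Real.log (1 + u)| ≤ B) (hθB : θ * B ≤ 1) :
    Real.exp (-θ * Real.log (1 + u)) - 1 ≤ -θ * Real.log (1 + u) + θ ^ 2 * B ^ 2 := by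
  set x := Real.log (1 + u) with hx
  have hBnn : 0 ≤ B := le_trans (abs_nonneg _) hB
  have habs : |(-θ) * x| ≤ 1 := by
    rw [abs_mul, abs_neg, abs_of_pos hθ]
    nlinarith [abs_nonneg x]
  have h := Real.abs_exp_sub_one_sub_id_le habs
  have h2 : Real.exp (-θ * x) - 1 - (-θ * x) ≤ (-θ * x) ^ 2 := by
    have := (abs_le.mp h).2
    calc Real.exp (-θ * x) - 1 - (-θ * x)
        = Real.exp ((-θ) * x) - 1 - ((-θ) * x) := by ring_nf
      _ ≤ ((-θ) * x) ^ 2 := this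
      _ = (-θ * x) ^ 2 := by ring
  have hx2 : x ^ 2 ≤ B ^ 2 := by nlinarith [abs_nonneg x, sq_abs x, abs_le.mp hB]
  nlinarith

set_option maxHeartbeats 1000000 in
/-- Choice of the exponent θ in the proof of stochastic permanence. -/
theorem choice_of_theta
    (a σ : ℝ → ℝ)
    (ha : ∃ B, ∀ t ≥ (0:ℝ), |a t| ≤ B)
    (hσ : ∃ B, ∀ t ≥ (0:ℝ), |σ t| ≤ B)
    (μ1 μ2 : Measure ℝ) [IsFiniteMeasure μ1] [IsFiniteMeasure μ2]
    (γ δ : ℝ → ℝ → ℝ)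
    (hγ : ∀ t z, -1 < γ t z) (hδ : ∀ t z, -1 < δ t z)
    (hγm : Measurable (Function.uncurry γ)) (hδm : Measurable (Function.uncurry δ))
    (hγb : ∃ B, ∀ t z, |Real.log (1 + γ t z)| ≤ B)
    (hδb : ∃ B, ∀ t z, |Real.log (1 + δ t z)| ≤ B)
    (β : ℝ → ℝ)
    (hβ : ∀ t, β t = σ t ^ 2 / 2 + (∫ z, (γ t z - Real.log (1 + γ t z)) ∂μ1)
        - ∫ z, Real.log (1 + δ t z) ∂μ2)
    (hinf : ∃ m > (0:ℝ), ∀ t ≥ (0:ℝ), m ≤ a t - β t) :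
    ∃ θ : ℝ, 0 < θ ∧ θ < 1 ∧ ∃ m > (0:ℝ), ∀ t ≥ (0:ℝ),
      m ≤ a t - σ t ^ 2 / 2 - (∫ z, γ t z ∂μ1) - (θ / 2) * σ t ^ 2
        - (1 / θ) * (∫ z, ((1 + γ t z) ^ (-θ) - 1) ∂μ1)
        - (1 / θ) * (∫ z, ((1 + δ t z) ^ (-θ) - 1) ∂μ2) := by
  obtain ⟨Bσ, hBσ⟩ := hσ
  obtain ⟨B1, hB1⟩ := hγb
  obtain ⟨B2, hB2⟩ := hδb
  obtain ⟨m, hm, hmle⟩ := hinf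
  have hBσ0 : 0 ≤ Bσ := le_trans (abs_nonneg _) (hBσ 0 le_rfl)
  have hB10 : 0 ≤ B1 := le_trans (abs_nonneg _) (hB1 0 0)
  have hB20 : 0 ≤ B2 := le_trans (abs_nonneg _) (hB2 0 0)
  obtain ⟨M1, hM1, hM10⟩ : ∃ M1, (μ1 Set.univ).toReal = M1 ∧ 0 ≤ M1 :=
    ⟨_, rfl, ENNReal.toReal_nonneg⟩
  obtain ⟨M2, hM2, hM20⟩ : ∃ M2, (μ2 Set.univ).toReal = M2 ∧ 0 ≤ M2 :=
    ⟨_, rfl, ENNReal.toReal_nonneg⟩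
  obtain ⟨K, hK, hK0⟩ :
      ∃ K, K = Bσ ^ 2 / 2 + B1 ^ 2 * M1 + B2 ^ 2 * M2 + 1 ∧ 0 < K := by
    refine ⟨_, rfl, ?_⟩
    nlinarith [sq_nonneg Bσ, mul_nonneg (sq_nonneg B1) hM10, mul_nonneg (sq_nonneg B2) hM20]
  obtain ⟨θ, hθ0, hθ1, hθB1, hθB2, hθK⟩ :
      ∃ θ : ℝ, 0 < θ ∧ θ < 1 ∧ θ * B1 ≤ 1 ∧ θ * B2 ≤ 1 ∧ θ * K ≤ m / 2 := by
    refine ⟨min (1/2 : ℝ) (min (1 / (B1 + B2 + 1)) (m / (2 * K))), ?_, ?_, ?_, ?_, ?_⟩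
    · exact lt_min (by norm_num) (lt_min (by positivity) (by positivity))
    · exact lt_of_le_of_lt (min_le_left _ _) (by norm_num)
    · have hθB : min (1/2 : ℝ) (min (1 / (B1 + B2 + 1)) (m / (2 * K)))
          ≤ 1 / (B1 + B2 + 1) := le_trans (min_le_right _ _) (min_le_left _ _)
      have h1 := (le_div_iff₀ (show (0:ℝ) < B1 + B2 + 1 by linarith)).mp hθB
      have h0 : 0 < min (1/2 : ℝ) (min (1 / (B1 + B2 + 1)) (m / (2 * K))) :=
        lt_min (by norm_num) (lt_min (by positivity) (by positivity))
      nlinarith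
    · have hθB : min (1/2 : ℝ) (min (1 / (B1 + B2 + 1)) (m / (2 * K)))
          ≤ 1 / (B1 + B2 + 1) := le_trans (min_le_right _ _) (min_le_left _ _)
      have h1 := (le_div_iff₀ (show (0:ℝ) < B1 + B2 + 1 by linarith)).mp hθB
      have h0 : 0 < min (1/2 : ℝ) (min (1 / (B1 + B2 + 1)) (m / (2 * K))) :=
        lt_min (by norm_num) (lt_min (by positivity) (by positivity))
      nlinarith
    · have hθm : min (1/2 : ℝ) (min (1 / (B1 + B2 + 1)) (m / (2 * K)))
          ≤ m / (2 * K) := le_trans (min_le_right _ _) (min_le_right _ _)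
      have h2 := mul_le_mul_of_nonneg_right hθm (le_of_lt hK0)
      have h3 : m / (2 * K) * K = m / 2 := by field_simp
      linarith
  refine ⟨θ, hθ0, hθ1, m / 2, by linarith, fun t ht => ?_⟩
  -- measurability
  have hγt : Measurable (γ t) := hγm.of_uncurry_left
  have hδt : Measurable (δ t) := hδm.of_uncurry_left
  have hlγm : Measurable fun z => Real.log (1 + γ t z) :=
    Real.measurable_log.comp (measurable_const.add hγt)
  have hlδm : Measurable fun z => Real.log (1 + δ t z) :=
    Real.measurable_log.comp (measurable_const.add hδt)
  -- positivity
  have hpγ : ∀ z, (0:ℝ) < 1 + γ t z := fun z => by linarith [hγ t z]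
  have hpδ : ∀ z, (0:ℝ) < 1 + δ t z := fun z => by linarith [hδ t z]
  -- bounds on γ
  have hγbd : ∀ z, |γ t z| ≤ Real.exp B1 := by
    intro z
    have h1 : 1 + γ t z ≤ Real.exp B1 := by
      calc 1 + γ t z = Real.exp (Real.log (1 + γ t z)) := (Real.exp_log (hpγ z)).symm
      _ ≤ Real.exp B1 := Real.exp_le_exp.mpr (abs_le.mp (hB1 t z)).2
    have h2 : (1:ℝ) ≤ Real.exp B1 := Real.one_le_exp hB10
    rw [abs_le]; constructor <;> nlinarith [hγ t z]
  -- rewrite rpow integrals as exp integrals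
  have hrγ : (∫ z, ((1 + γ t z) ^ (-θ) - 1) ∂μ1)
      = ∫ z, (Real.exp (-θ * Real.log (1 + γ t z)) - 1) ∂μ1 := by
    refine integral_congr_ae (Eventually.of_forall fun z => ?_)
    dsimp only
    rw [Real.rpow_def_of_pos (hpγ z)]
    ring_nf
  have hrδ : (∫ z, ((1 + δ t z) ^ (-θ) - 1) ∂μ2)
      = ∫ z, (Real.exp (-θ * Real.log (1 + δ t z)) - 1) ∂μ2 := by
    refine integral_congr_ae (Eventually.of_forall fun z => ?_)
    dsimp only
    rw [Real.rpow_def_of_pos (hpδ z)]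
    ring_nf
  -- integrabilities
  have Iγ : Integrable (γ t) μ1 := bdd_integrable hγt hγbd
  have Ilγ : Integrable (fun z => Real.log (1 + γ t z)) μ1 :=
    bdd_integrable hlγm (fun z => hB1 t z)
  have Ilδ : Integrable (fun z => Real.log (1 + δ t z)) μ2 :=
    bdd_integrable hlδm (fun z => hB2 t z)
  have Ieγ : Integrable (fun z => Real.exp (-θ * Real.log (1 + γ t z)) - 1) μ1 := by
    refine bdd_integrable ((Real.measurable_exp.comp (measurable_const.mul hlγm)).sub
      measurable_const) (C := Real.exp 1 + 1) (fun z => ?_)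
    have h1 : -θ * Real.log (1 + γ t z) ≤ 1 := by
      have := (abs_le.mp (hB1 t z)).1
      nlinarith
    have h2 : (0:ℝ) < Real.exp (-θ * Real.log (1 + γ t z)) := Real.exp_pos _
    have h3 : Real.exp (-θ * Real.log (1 + γ t z)) ≤ Real.exp 1 := Real.exp_le_exp.mpr h1
    rw [abs_le]
    constructor <;> linarith [Real.exp_pos (1:ℝ)]
  have Ieδ : Integrable (fun z => Real.exp (-θ * Real.log (1 + δ t z)) - 1) μ2 := by
    refine bdd_integrable ((Real.measurable_exp.comp (measurable_const.mul hlδm)).sub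
      measurable_const) (C := Real.exp 1 + 1) (fun z => ?_)
    have h1 : -θ * Real.log (1 + δ t z) ≤ 1 := by
      have := (abs_le.mp (hB2 t z)).1
      nlinarith
    have h2 : (0:ℝ) < Real.exp (-θ * Real.log (1 + δ t z)) := Real.exp_pos _
    have h3 : Real.exp (-θ * Real.log (1 + δ t z)) ≤ Real.exp 1 := Real.exp_le_exp.mpr h1
    rw [abs_le]
    constructor <;> linarith [Real.exp_pos (1:ℝ)]
  -- split β integral
  have hsplit : (∫ z, (γ t z - Real.log (1 + γ t z)) ∂μ1)
      = (∫ z, γ t z ∂μ1) - ∫ z, Real.log (1 + γ t z) ∂μ1 := integral_sub Iγ Ilγ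
  -- main integral bounds
  have hIe1 : (∫ z, (Real.exp (-θ * Real.log (1 + γ t z)) - 1) ∂μ1)
      ≤ -θ * (∫ z, Real.log (1 + γ t z) ∂μ1) + θ ^ 2 * B1 ^ 2 * M1 := by
    have hmono : (∫ z, (Real.exp (-θ * Real.log (1 + γ t z)) - 1) ∂μ1)
        ≤ ∫ z, (-θ * Real.log (1 + γ t z) + θ ^ 2 * B1 ^ 2) ∂μ1 :=
      integral_mono Ieγ ((Ilγ.const_mul (-θ)).add (integrable_const _))
        (fun z => key_pt hθ0 (hB1 t z) hθB1)
    have heq : (∫ z, (-θ * Real.log (1 + γ t z) + θ ^ 2 * B1 ^ 2) ∂μ1)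
        = -θ * (∫ z, Real.log (1 + γ t z) ∂μ1) + θ ^ 2 * B1 ^ 2 * M1 := by
      rw [integral_add (Ilγ.const_mul (-θ)) (integrable_const _),
        integral_const_mul, integral_const, smul_eq_mul, measureReal_def, hM1]
      ring
    linarith
  have hIe2 : (∫ z, (Real.exp (-θ * Real.log (1 + δ t z)) - 1) ∂μ2)
      ≤ -θ * (∫ z, Real.log (1 + δ t z) ∂μ2) + θ ^ 2 * B2 ^ 2 * M2 := by
    have hmono : (∫ z, (Real.exp (-θ * Real.log (1 + δ t z)) - 1) ∂μ2)
        ≤ ∫ z, (-θ * Real.log (1 + δ t z) + θ ^ 2 * B2 ^ 2) ∂μ2 :=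
      integral_mono Ieδ ((Ilδ.const_mul (-θ)).add (integrable_const _))
        (fun z => key_pt hθ0 (hB2 t z) hθB2)
    have heq : (∫ z, (-θ * Real.log (1 + δ t z) + θ ^ 2 * B2 ^ 2) ∂μ2)
        = -θ * (∫ z, Real.log (1 + δ t z) ∂μ2) + θ ^ 2 * B2 ^ 2 * M2 := by
      rw [integral_add (Ilδ.const_mul (-θ)) (integrable_const _),
        integral_const_mul, integral_const, smul_eq_mul, measureReal_def, hM2]
      ring
    linarith
  -- divide by θ
  have hθinv : 0 < 1 / θ := one_div_pos.mpr hθ0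
  have hdiv1 : (1 / θ) * (∫ z, ((1 + γ t z) ^ (-θ) - 1) ∂μ1)
      ≤ -(∫ z, Real.log (1 + γ t z) ∂μ1) + θ * B1 ^ 2 * M1 := by
    rw [hrγ]
    have h := mul_le_mul_of_nonneg_left hIe1 (le_of_lt hθinv)
    have heq : (1 / θ) * (-θ * (∫ z, Real.log (1 + γ t z) ∂μ1) + θ ^ 2 * B1 ^ 2 * M1)
        = -(∫ z, Real.log (1 + γ t z) ∂μ1) + θ * B1 ^ 2 * M1 := by
      field_simp
    linarith
  have hdiv2 : (1 / θ) * (∫ z, ((1 + δ t z) ^ (-θ) - 1) ∂μ2)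
      ≤ -(∫ z, Real.log (1 + δ t z) ∂μ2) + θ * B2 ^ 2 * M2 := by
    rw [hrδ]
    have h := mul_le_mul_of_nonneg_left hIe2 (le_of_lt hθinv)
    have heq : (1 / θ) * (-θ * (∫ z, Real.log (1 + δ t z) ∂μ2) + θ ^ 2 * B2 ^ 2 * M2)
        = -(∫ z, Real.log (1 + δ t z) ∂μ2) + θ * B2 ^ 2 * M2 := by
      field_simp
    linarith
  -- σ bound
  have hσθ : (θ / 2) * σ t ^ 2 ≤ (θ / 2) * Bσ ^ 2 := by
    have h := hBσ t ht
    have hσ2 : σ t ^ 2 ≤ Bσ ^ 2 := by nlinarith [abs_nonneg (σ t), sq_abs (σ t)]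
    have := mul_le_mul_of_nonneg_left hσ2 (by positivity : (0:ℝ) ≤ θ / 2)
    linarith
  -- finish
  have hab := hmle t ht
  rw [hβ t, hsplit] at hab
  have htheta_sum : θ * B1 ^ 2 * M1 + θ * B2 ^ 2 * M2 + (θ / 2) * Bσ ^ 2 ≤ θ * K := by
    rw [hK]
    nlinarith
  linarith
end

section
/- Let c > 0, ε > 0, x0 > 0 and t0 ≥ 0, and let x : [0,∞) → (0,∞) be continuous and satisfy, for all t ≥ t0, ln x(t) ≤ ln x0 + ε·t − c·∫_0^t x(s) ds. Then limsup_{t→∞} (1/t)·∫_0^t x(s) ds ≤ ε/c. -/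
open MeasureTheory Filter

/-- Deterministic comparison lemma in the proof of nonpersistence in the mean. -/
theorem nonpersistence_comparison
    (c ε x0 t0 : ℝ) (hc : 0 < c) (hε : 0 < ε) (hx0 : 0 < x0) (ht0 : 0 ≤ t0)
    (x : ℝ → ℝ) (hcont : ContinuousOn x (Set.Ici 0))
    (hxpos : ∀ t ≥ (0:ℝ), 0 < x t)
    (hineq : ∀ t ≥ t0,
      Real.log (x t) ≤ Real.log x0 + ε * t - c * ∫ s in (0:ℝ)..t, x s) :
    limsup (fun t => (1 / t) * ∫ s in (0:ℝ)..t, x s) atTop ≤ ε / c := by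
  -- continuous extension of x to all of ℝ
  set g : ℝ → ℝ := fun t => x (max t 0) with hg_def
  have hgc : Continuous g :=
    hcont.comp_continuous (continuous_id.max continuous_const)
      (fun t => Set.mem_Ici.mpr (le_max_right _ _))
  have hgpos : ∀ t, 0 < g t := fun t => hxpos _ (le_max_right _ _)
  set y : ℝ → ℝ := fun t => ∫ s in (0:ℝ)..t, g s with hy_def
  have hy : ∀ t, HasDerivAt y (g t) t := by
    intro t
    exact intervalIntegral.integral_hasDerivAt_right
      (hgc.intervalIntegrable 0 t)
      (hgc.stronglyMeasurableAtFilter _ _)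
      hgc.continuousAt
  -- the original integral coincides with y for t ≥ 0
  have hagree : ∀ t ≥ (0:ℝ), (∫ s in (0:ℝ)..t, x s) = y t := by
    intro t ht
    refine intervalIntegral.integral_congr ?_
    intro s hs
    rw [Set.uIcc_of_le ht] at hs
    simp [hg_def, max_eq_left hs.1]
  have hy0 : ∀ t ≥ (0:ℝ), 0 ≤ y t := by
    intro t ht
    exact intervalIntegral.integral_nonneg ht (fun s _ => (hgpos s).le)
  -- key inequality on g
  have hkey : ∀ t ≥ t0, Real.exp (c * y t) * g t ≤ x0 * Real.exp (ε * t) := by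
    intro t ht
    have ht0' : (0:ℝ) ≤ t := le_trans ht0 ht
    have h1 := hineq t ht
    rw [hagree t ht0'] at h1
    have hgx : x t = g t := by simp [hg_def, max_eq_left ht0']
    rw [hgx] at h1
    have h2 : g t ≤ x0 * Real.exp (ε * t) * Real.exp (-(c * y t)) := by
      have := Real.exp_le_exp.mpr h1
      rw [Real.exp_log (hgpos t)] at this
      calc g t ≤ Real.exp (Real.log x0 + ε * t - c * y t) := this
        _ = x0 * Real.exp (ε * t) * Real.exp (-(c * y t)) := by
            rw [sub_eq_add_neg, Real.exp_add, Real.exp_add, Real.exp_log hx0]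
    calc Real.exp (c * y t) * g t
        ≤ Real.exp (c * y t) * (x0 * Real.exp (ε * t) * Real.exp (-(c * y t))) := by
          exact mul_le_mul_of_nonneg_left h2 (Real.exp_pos _).le
      _ = x0 * Real.exp (ε * t) * (Real.exp (c * y t) * Real.exp (-(c * y t))) := by ring
      _ = x0 * Real.exp (ε * t) := by rw [← Real.exp_add, add_neg_cancel, Real.exp_zero, mul_one]
  -- comparison function
  set φ : ℝ → ℝ := fun t => x0 / ε * Real.exp (ε * t) - Real.exp (c * y t) / c with hφ_def
  have hφd : ∀ t, HasDerivAt φ (x0 * Real.exp (ε * t) - Real.exp (c * y t) * g t) t := by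
    intro t
    have hexp : HasDerivAt (fun t : ℝ => Real.exp (ε * t)) (Real.exp (ε * t) * ε) t := by
      simpa [Function.comp_def] using (Real.hasDerivAt_exp (ε * t)).comp t ((hasDerivAt_id t).const_mul ε)
    have h1 : HasDerivAt (fun t => x0 / ε * Real.exp (ε * t)) (x0 * Real.exp (ε * t)) t := by
      refine (hexp.const_mul (x0 / ε)).congr_deriv ?_
      field_simp
      try ring
    have h2 : HasDerivAt (fun t => Real.exp (c * y t) / c) (Real.exp (c * y t) * g t) t := by
      have h' : HasDerivAt (fun t => Real.exp (c * y t)) (Real.exp (c * y t) * (c * g t)) t :=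
        ((hy t).const_mul c).exp
      refine (h'.div_const c).congr_deriv ?_
      field_simp
      try ring
    exact h1.sub h2
  have hφmono : MonotoneOn φ (Set.Ici t0) := by
    refine monotoneOn_of_deriv_nonneg (convex_Ici t0)
      (fun t _ => (hφd t).continuousAt.continuousWithinAt)
      (fun t _ => (hφd t).differentiableAt.differentiableWithinAt) ?_
    intro t ht
    rw [interior_Ici] at ht
    rw [(hφd t).deriv]
    have := hkey t ht.le
    linarith
  set A : ℝ := Real.exp (c * y t0) with hA_def
  set B : ℝ := c * x0 / ε with hB_def
  have hApos : 0 < A := Real.exp_pos _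
  have hBpos : 0 < B := by positivity
  -- main bound: exp (c * y t) ≤ A + B * exp (ε * t)
  have hbound : ∀ t ≥ t0, Real.exp (c * y t) ≤ A + B * Real.exp (ε * t) := by
    intro t ht
    have := hφmono (Set.self_mem_Ici) (Set.mem_Ici.mpr ht) ht
    rw [hφ_def] at this
    simp only at this
    have h1 : Real.exp (c * y t) / c - Real.exp (c * y t0) / c
        ≤ x0 / ε * Real.exp (ε * t) - x0 / ε * Real.exp (ε * t0) := by linarith
    have h2 : Real.exp (c * y t) - A ≤ B * Real.exp (ε * t) - B * Real.exp (ε * t0) := by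
      have hmul := mul_le_mul_of_nonneg_left h1 hc.le
      have e1 : c * (Real.exp (c * y t) / c - Real.exp (c * y t0) / c)
          = Real.exp (c * y t) - A := by
        rw [hA_def]; field_simp
      have e2 : c * (x0 / ε * Real.exp (ε * t) - x0 / ε * Real.exp (ε * t0))
          = B * Real.exp (ε * t) - B * Real.exp (ε * t0) := by
        rw [hB_def]; field_simp; try ring
      rw [e1, e2] at hmul
      exact hmul
    have h3 : 0 ≤ B * Real.exp (ε * t0) := by positivity
    linarith
  -- logarithmic bound on y
  have hlog : ∀ t ≥ max t0 1, (1 / t) * y t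
      ≤ ε / c + 1 / (c * t) * Real.log (B + A * Real.exp (-(ε * t))) := by
    intro t ht
    have ht1 : (1:ℝ) ≤ t := le_trans (le_max_right _ _) ht
    have htpos : 0 < t := lt_of_lt_of_le one_pos ht1
    have htt0 : t0 ≤ t := le_trans (le_max_left _ _) ht
    have hsum : (0:ℝ) < B + A * Real.exp (-(ε * t)) := by positivity
    have h1 : c * y t ≤ Real.log (A + B * Real.exp (ε * t)) := by
      have := hbound t htt0
      have h := Real.log_le_log (Real.exp_pos _) this
      rwa [Real.log_exp] at h
    have h2 : A + B * Real.exp (ε * t)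
        = Real.exp (ε * t) * (B + A * Real.exp (-(ε * t))) := by
      rw [Real.exp_neg]
      field_simp
      try ring
    have h3 : Real.log (A + B * Real.exp (ε * t))
        = ε * t + Real.log (B + A * Real.exp (-(ε * t))) := by
      rw [h2, Real.log_mul (Real.exp_pos _).ne' hsum.ne', Real.log_exp]
    rw [h3] at h1
    -- c * y t ≤ ε t + L; divide by c * t
    have hct : 0 < c * t := by positivity
    have h4 : (c * y t) / (c * t) ≤ (ε * t + Real.log (B + A * Real.exp (-(ε * t)))) / (c * t) :=
      div_le_div_of_nonneg_right h1 hct.le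
    calc (1 / t) * y t = (c * y t) / (c * t) := by
          field_simp
      _ ≤ (ε * t + Real.log (B + A * Real.exp (-(ε * t)))) / (c * t) := h4
      _ = ε / c + 1 / (c * t) * Real.log (B + A * Real.exp (-(ε * t))) := by
          field_simp
  -- the bounding function tends to ε/c
  set h : ℝ → ℝ := fun t => ε / c + 1 / (c * t) * Real.log (B + A * Real.exp (-(ε * t)))
    with hh_def
  have htend : Tendsto h atTop (nhds (ε / c)) := by
    have h0 : Tendsto (fun t : ℝ => 1 / (c * t)) atTop (nhds 0) := by
      have : Tendsto (fun t : ℝ => c * t) atTop atTop :=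
        tendsto_atTop_atTop_of_monotone' (fun a b hab => by nlinarith)
          (by
            rintro ⟨b, hb⟩
            have := hb (Set.mem_range_self ((b + 1) / c + 1))
            have hcb : c * ((b + 1) / c + 1) = b + 1 + c := by field_simp
            nlinarith)
      exact Filter.Tendsto.congr (fun t => by simp) this.inv_tendsto_atTop
    have hL : Tendsto (fun t : ℝ => Real.log (B + A * Real.exp (-(ε * t)))) atTop
        (nhds (Real.log B)) := by
      have he : Tendsto (fun t : ℝ => B + A * Real.exp (-(ε * t))) atTop (nhds B) := by
        have : Tendsto (fun t : ℝ => -(ε * t)) atTop atBot := by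
          apply Filter.tendsto_neg_atBot_iff.mpr
          exact Tendsto.const_mul_atTop hε tendsto_id
        have := Real.tendsto_exp_atBot.comp this
        have h2 := (this.const_mul A).const_add B
        simpa using h2
      exact ((Real.continuousAt_log hBpos.ne').tendsto.comp he)
    have := (h0.mul hL).const_add (ε / c)
    rw [zero_mul, add_zero] at this
    exact this
  -- conclude via limsup comparison
  have hev : (fun t => (1 / t) * ∫ s in (0:ℝ)..t, x s) ≤ᶠ[atTop] h := by
    filter_upwards [Filter.eventually_ge_atTop (max t0 1)] with t ht
    have ht0' : (0:ℝ) ≤ t := le_trans zero_le_one (le_trans (le_max_right _ _) ht)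
    rw [hagree t ht0']
    exact hlog t ht
  have hcb : IsCoboundedUnder (· ≤ ·) atTop (fun t => (1 / t) * ∫ s in (0:ℝ)..t, x s) := by
    apply Filter.isCoboundedUnder_le_of_eventually_le atTop (x := 0)
    filter_upwards [Filter.eventually_ge_atTop (0:ℝ)] with t ht
    rw [hagree t ht]
    have := hy0 t ht
    positivity
  have hb : IsBoundedUnder (· ≤ ·) atTop h := htend.isBoundedUnder_le
  calc limsup (fun t => (1 / t) * ∫ s in (0:ℝ)..t, x s) atTop
      ≤ limsup h atTop := Filter.limsup_le_limsup hev hcb hb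
    _ = ε / c := htend.limsup_eq
end
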